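/- Let F = (ℝ^m; f_1, …, f_N) be an affine IFS with a coding map π : {1,…,N}^∞ → ℝ^m, and let V = aff(π(Ω)) be the affine hull of the image of π. Then each f_n maps V into V, and for every σ ∈ {1,…,N}^∞ and every x ∈ V, lim_{k→∞} f_{σ_1}∘⋯∘f_{σ_k}(x) = π(σ); i.e., F restricted to V is point-fibred. -/

import Mathlib

/-- `ifsComp f σ k x = f_{σ 0} ∘ f_{σ 1} ∘ ⋯ ∘ f_{σ (k-1)} (x)`. -/
def ifsComp {E : Type*} {N : ℕ} (f : Fin N → E → E) (σ : ℕ → Fin N) : ℕ → E → E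
  | 0, x => x
  | k + 1, x => ifsComp f σ k (f (σ k) x)

/-- The inverse shift `s_n`, prepending the symbol `n` to a sequence. -/
def prependSymbol {N : ℕ} (n : Fin N) (σ : ℕ → Fin N) : ℕ → Fin N
  | 0 => n
  | k + 1 => σ k

/-- prepend the first `k` symbols of `σ` to `τ`. -/
def appendk {N : ℕ} (σ : ℕ → Fin N) (k : ℕ) (τ : ℕ → Fin N) : ℕ → Fin N :=
  fun j => if j < k then σ j else τ (j - k)

lemma appendk_succ {N : ℕ} (σ : ℕ → Fin N) (k : ℕ) (τ : ℕ → Fin N) :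
    appendk σ k (prependSymbol (σ k) τ) = appendk σ (k + 1) τ := by
  funext j
  unfold appendk
  rcases lt_trichotomy j k with h | rfl | h
  · simp [h, h.trans (Nat.lt_succ_self k)]
  · simp [Nat.lt_succ_self, prependSymbol]
  · rw [if_neg (by omega), if_neg (by omega)]
    obtain ⟨d, rfl⟩ : ∃ d, j = k + 1 + d := ⟨j - (k + 1), by omega⟩
    have : k + 1 + d - k = d + 1 := by omega
    rw [this, prependSymbol]
    congr 1
    omega

theorem point_fibred_on_affine_hull (m N : ℕ)
    (f : Fin N → EuclideanSpace ℝ (Fin m) → EuclideanSpace ℝ (Fin m))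
    (hf_affine : ∀ n, ∃ g : EuclideanSpace ℝ (Fin m) →ᵃ[ℝ] EuclideanSpace ℝ (Fin m),
      f n = g)
    (π : (ℕ → Fin N) → EuclideanSpace ℝ (Fin m))
    (hπ_cont : Continuous π)
    (hπ_comm : ∀ (n : Fin N) (σ : ℕ → Fin N), f n (π σ) = π (prependSymbol n σ)) :
    (∀ n : Fin N, Set.MapsTo (f n)
        (affineSpan ℝ (Set.range π) : Set (EuclideanSpace ℝ (Fin m)))
        (affineSpan ℝ (Set.range π) : Set (EuclideanSpace ℝ (Fin m)))) ∧
    ∀ (σ : ℕ → Fin N),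
      ∀ x ∈ (affineSpan ℝ (Set.range π) : Set (EuclideanSpace ℝ (Fin m))),
        Filter.Tendsto (fun k => ifsComp f σ k x) Filter.atTop (nhds (π σ)) := by
  -- each `ifsComp f σ k` is an affine map
  have hcomp : ∀ (σ : ℕ → Fin N) (k : ℕ),
      ∃ g : EuclideanSpace ℝ (Fin m) →ᵃ[ℝ] EuclideanSpace ℝ (Fin m),
        ifsComp f σ k = ⇑g := by
    intro σ k
    induction k with
    | zero => exact ⟨AffineMap.id ℝ _, rfl⟩
    | succ k ih =>
      obtain ⟨g, hg⟩ := ih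
      obtain ⟨g', hg'⟩ := hf_affine (σ k)
      exact ⟨g.comp g', by funext x; simp [ifsComp, hg, hg', AffineMap.comp]⟩
  -- `ifsComp` on points of the image of `π`
  have hkey : ∀ (σ τ : ℕ → Fin N) (k : ℕ),
      ifsComp f σ k (π τ) = π (appendk σ k τ) := by
    intro σ τ k
    induction k generalizing τ with
    | zero =>
      show π τ = π (appendk σ 0 τ)
      congr 1
    | succ k ih =>
      rw [ifsComp, hπ_comm, ih, appendk_succ]
  -- convergence on points of the image
  have htend : ∀ (σ τ : ℕ → Fin N),
      Filter.Tendsto (fun k => ifsComp f σ k (π τ)) Filter.atTop (nhds (π σ)) := by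
    intro σ τ
    have h1 : Filter.Tendsto (fun k => appendk σ k τ) Filter.atTop (nhds σ) := by
      rw [tendsto_pi_nhds]
      intro j
      apply Filter.Tendsto.congr' (f₁ := fun _ => σ j)
      · filter_upwards [Filter.eventually_ge_atTop (j + 1)] with k hk
        simp [appendk, Nat.lt_of_lt_of_le (Nat.lt_succ_self j) hk]
      · exact tendsto_const_nhds
    simpa only [hkey, Function.comp_def] using (hπ_cont.tendsto σ).comp h1
  constructor
  · intro n x hx
    obtain ⟨g, hg⟩ := hf_affine n
    have : f n x ∈ (affineSpan ℝ (Set.range π)).map g := by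
      rw [hg]
      exact AffineSubspace.mem_map.2 ⟨x, hx, rfl⟩
    refine SetLike.le_def.1 ?_ this
    rw [AffineSubspace.map_span]
    apply affineSpan_le.2
    rintro _ ⟨_, ⟨τ, rfl⟩, rfl⟩
    rw [← hg, hπ_comm]
    exact mem_affineSpan ℝ (Set.mem_range_self _)
  · intro σ x hx
    obtain ⟨s, w, hw, hxeq⟩ := eq_affineCombination_of_mem_affineSpan hx
    have hconv : Filter.Tendsto
        (fun k => ∑ i ∈ s, w i • ifsComp f σ k (π i)) Filter.atTop (nhds (π σ)) := by
      have : Filter.Tendsto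
          (fun k => ∑ i ∈ s, w i • ifsComp f σ k (π i)) Filter.atTop
          (nhds (∑ i ∈ s, w i • π σ)) := by
        apply tendsto_finset_sum
        intro i _
        exact (htend σ i).const_smul (w i)
      rwa [← Finset.sum_smul, hw, one_smul] at this
    apply hconv.congr
    intro k
    obtain ⟨g, hg⟩ := hcomp σ k
    rw [hxeq, hg, Finset.map_affineCombination _ _ _ hw g,
      Finset.affineCombination_eq_linear_combination _ _ _ hw]
    rfl
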